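/- Fix κ_y, κ_z > 0 and unit vectors μ_y, μ_z ∈ ℝ^p. For α ∈ (0,1)∪(1,∞) with κ_α = ‖ακ_y μ_y + (1−α)κ_z μ_z‖₂ > 0, let R(α) = (ν/(α−1))·ln(κ_y^α κ_z^{1−α}/κ_α) + (α/(α−1))·ln(I_ν(κ_α)/I_ν(κ_y)) − ln(I_ν(κ_α)/I_ν(κ_z)) be the analytical expression of the Rényi divergence of order α between the two von Mises–Fisher distributions. Then lim_{α→1} R(α) = ν·ln(κ_y/κ_z) − ln(I_ν(κ_y)/I_ν(κ_z)) + r_ν(κ_y)·⟨κ_y μ_y − κ_z μ_z, μ_y⟩, the analytical expression of the Kullback–Leibler divergence, where r_ν(κ) = I_{ν+1}(κ)/I_ν(κ). -/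

import Mathlib

open Real Filter
open scoped RealInnerProductSpace

/-- `ν = p/2 − 1`. -/
noncomputable def nuOf (p : ℕ) : ℝ := (p : ℝ) / 2 - 1

/-- The modified Bessel function of the first kind,
`I_ν(z) = (z/2)^ν ∑_{k=0}^∞ (z/2)^{2k}/(k!·Γ(ν+k+1))`. -/
noncomputable def besselI (ν z : ℝ) : ℝ :=
  (z / 2) ^ ν * ∑' k : ℕ, (z / 2) ^ (2 * k) / (Nat.factorial k * Real.Gamma (ν + k + 1))

/-- The ratio of modified Bessel functions `r_ν(κ) = I_{ν+1}(κ)/I_ν(κ)`. -/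
noncomputable def besselRatio (ν κ : ℝ) : ℝ := besselI (ν + 1) κ / besselI ν κ

noncomputable def besselS (ν z : ℝ) : ℝ :=
  ∑' k : ℕ, (z / 2) ^ (2 * k) / (Nat.factorial k * Real.Gamma (ν + k + 1))

lemma gamma_fact_le {ν : ℝ} (hν : 0 ≤ ν) :
    ∀ k : ℕ, (Nat.factorial k : ℝ) * Real.Gamma (ν + 1) ≤ Real.Gamma (ν + k + 1) := by
  intro k
  induction k with
  | zero => simp
  | succ k ih =>
      have h1 : Real.Gamma (ν + (k + 1 : ℕ) + 1) = (ν + k + 1) * Real.Gamma (ν + k + 1) := by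
        have := Real.Gamma_add_one (show ν + (k:ℝ) + 1 ≠ 0 by positivity)
        push_cast
        rw [show ν + ((k : ℝ) + 1) + 1 = (ν + k + 1) + 1 by ring, this]
      rw [h1]
      have hk1 : ((k : ℝ) + 1) ≤ ν + k + 1 := by linarith
      have hpos : 0 < Real.Gamma (ν + k + 1) := Real.Gamma_pos_of_pos (by positivity)
      calc (Nat.factorial (k + 1) : ℝ) * Real.Gamma (ν + 1)
          = ((k : ℝ) + 1) * ((Nat.factorial k : ℝ) * Real.Gamma (ν + 1)) := by
            push_cast [Nat.factorial_succ]; ring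
        _ ≤ ((k : ℝ) + 1) * Real.Gamma (ν + k + 1) := by
            exact mul_le_mul_of_nonneg_left ih (by positivity)
        _ ≤ (ν + k + 1) * Real.Gamma (ν + k + 1) := by
            exact mul_le_mul_of_nonneg_right hk1 hpos.le

lemma summable_besselS {ν : ℝ} (hν : 0 ≤ ν) (x : ℝ) :
    Summable fun k : ℕ => x ^ (2 * k) / (Nat.factorial k * Real.Gamma (ν + k + 1)) := by
  have hΓ : 0 < Real.Gamma (ν + 1) := Real.Gamma_pos_of_pos (by positivity)
  apply Summable.of_nonneg_of_le (fun k => ?_) (fun k => ?_)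
      (((Real.summable_pow_div_factorial (x ^ 2)).mul_right (Real.Gamma (ν + 1))⁻¹))
  · have hΓk : 0 < Real.Gamma (ν + k + 1) := Real.Gamma_pos_of_pos (by positivity)
    have : (0:ℝ) ≤ x ^ (2 * k) := by rw [pow_mul]; positivity
    positivity
  · have hΓk : 0 < Real.Gamma (ν + k + 1) := Real.Gamma_pos_of_pos (by positivity)
    have hge := gamma_fact_le hν k
    have hfacpos : (0:ℝ) < Nat.factorial k := by exact_mod_cast Nat.factorial_pos k
    have h1 : (Nat.factorial k : ℝ) * Real.Gamma (ν + 1) ≤ Nat.factorial k * Real.Gamma (ν + k + 1) := by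
      have : Real.Gamma (ν + 1) ≤ Real.Gamma (ν + k + 1) := le_trans (le_mul_of_one_le_left hΓ.le
        (by exact_mod_cast Nat.one_le_iff_ne_zero.mpr (Nat.factorial_ne_zero k))) hge
      exact mul_le_mul_of_nonneg_left this hfacpos.le
    have hx : (0:ℝ) ≤ (x^2) ^ k := by positivity
    have h2 : (x^2)^k / ((Nat.factorial k : ℝ) * Real.Gamma (ν+k+1))
        ≤ (x^2)^k / ((Nat.factorial k : ℝ) * Real.Gamma (ν+1)) :=
      div_le_div_of_nonneg_left hx (by positivity) h1
    calc x ^ (2*k) / ((Nat.factorial k : ℝ) * Real.Gamma (ν+k+1))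
        = (x^2)^k / ((Nat.factorial k : ℝ) * Real.Gamma (ν+k+1)) := by rw [pow_mul]
      _ ≤ (x^2)^k / ((Nat.factorial k : ℝ) * Real.Gamma (ν+1)) := h2
      _ = (x^2)^k / (Nat.factorial k : ℝ) * (Real.Gamma (ν+1))⁻¹ := by
          field_simp

lemma besselS_pos {ν : ℝ} (hν : 0 ≤ ν) (z : ℝ) : 0 < besselS ν z := by
  refine Summable.tsum_pos (summable_besselS hν (z/2)) (fun k => ?_) 0 ?_
  · have hΓk : 0 < Real.Gamma (ν + k + 1) := Real.Gamma_pos_of_pos (by positivity)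
    have : (0:ℝ) ≤ (z/2) ^ (2 * k) := by rw [pow_mul]; positivity
    positivity
  · have hΓ : 0 < Real.Gamma (ν + (0:ℕ) + 1) := Real.Gamma_pos_of_pos (by positivity)
    simp only [mul_zero, pow_zero, Nat.factorial_zero, Nat.cast_one, one_mul]
    have : 0 < Real.Gamma (ν + (0:ℕ) + 1) := hΓ
    push_cast at this ⊢
    simpa using one_div_pos.mpr hΓ

lemma hasDerivAt_besselS {ν : ℝ} (hν : 0 ≤ ν) (z : ℝ) :
    HasDerivAt (besselS ν) (z / 2 * besselS (ν + 1) z) z := by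
  set g : ℕ → ℝ → ℝ := fun k y => (y / 2) ^ (2 * k) / (Nat.factorial k * Real.Gamma (ν + k + 1))
    with hg_def
  set g' : ℕ → ℝ → ℝ := fun k y =>
      (k : ℝ) * (y / 2) ^ (2 * k - 1) / (Nat.factorial k * Real.Gamma (ν + k + 1)) with hg'_def
  set R : ℝ := |z| + 1 with hR
  have hRpos : (0:ℝ) < R := by positivity
  have hzmem : z ∈ Set.Ioo (-R) R := by
    constructor <;> [nlinarith [abs_nonneg z, neg_abs_le z]; nlinarith [le_abs_self z]]
  set u : ℕ → ℝ := fun k =>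
      (k : ℝ) * (R / 2) ^ (2 * k - 1) / (Nat.factorial k * Real.Gamma (ν + k + 1)) with hu_def
  -- key algebraic identity for the shifted terms
  have hshift : ∀ (x : ℝ) (k : ℕ),
      (k + 1 : ℝ) * (x / 2) ^ (2 * (k + 1) - 1) / (Nat.factorial (k + 1) * Real.Gamma (ν + (k + 1 : ℕ) + 1))
      = (x / 2) * ((x / 2) ^ (2 * k) / (Nat.factorial k * Real.Gamma (ν + 1 + k + 1))) := by
    intro x k
    have he : 2 * (k + 1) - 1 = 2 * k + 1 := by omega
    have hΓeq : Real.Gamma (ν + (k + 1 : ℕ) + 1) = Real.Gamma (ν + 1 + k + 1) := by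
      push_cast; ring_nf
    have hΓpos : 0 < Real.Gamma (ν + 1 + k + 1) := Real.Gamma_pos_of_pos (by positivity)
    rw [he, hΓeq, Nat.factorial_succ, pow_succ]
    have hfp : (0:ℝ) < Nat.factorial k := by exact_mod_cast Nat.factorial_pos k
    push_cast
    field_simp
  have hu : Summable u := by
    rw [← summable_nat_add_iff 1]
    have := (summable_besselS (show (0:ℝ) ≤ ν + 1 by linarith) (R/2)).mul_left (R/2)
    apply this.congr
    intro k
    have h := hshift R k
    simp only [hu_def]
    push_cast at h ⊢
    linarith
  have hg : ∀ (k : ℕ) (y : ℝ), y ∈ Set.Ioo (-R) R → HasDerivAt (g k) (g' k y) y := by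
    intro k y _
    have h1 : HasDerivAt (fun y : ℝ => y / 2) (1 / 2) y := by
      simpa using (hasDerivAt_id y).div_const 2
    have h2 := (h1.pow (2 * k)).div_const ((Nat.factorial k : ℝ) * Real.Gamma (ν + k + 1))
    refine h2.congr_deriv (Eq.symm ?_)
    push_cast
    ring
  have hg' : ∀ (k : ℕ) (y : ℝ), y ∈ Set.Ioo (-R) R → ‖g' k y‖ ≤ u k := by
    intro k y hy
    have hΓk : 0 < Real.Gamma (ν + k + 1) := Real.Gamma_pos_of_pos (by positivity)
    have hyabs : |y| ≤ R := abs_le.mpr ⟨hy.1.le, hy.2.le⟩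
    have hyR : |y / 2| ≤ R / 2 := by rw [abs_div, abs_two]; gcongr
    have hpow : |y / 2| ^ (2 * k - 1) ≤ (R / 2) ^ (2 * k - 1) :=
      pow_le_pow_left₀ (abs_nonneg _) hyR _
    have heq : ‖g' k y‖ = (k : ℝ) * |y / 2| ^ (2 * k - 1)
        / ((Nat.factorial k : ℝ) * Real.Gamma (ν + k + 1)) := by
      simp only [hg'_def, Real.norm_eq_abs, abs_div, abs_mul, abs_pow, Nat.abs_cast,
        abs_of_pos (show (0:ℝ) < (Nat.factorial k : ℝ) * Real.Gamma (ν + k + 1) by positivity)]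
    rw [heq, hu_def]
    exact div_le_div_of_nonneg_right (mul_le_mul_of_nonneg_left hpow (Nat.cast_nonneg k))
      (by positivity)
  have hg0 : Summable fun k => g k z := summable_besselS hν (z / 2)
  have hmain := hasDerivAt_tsum_of_isPreconnected hu isOpen_Ioo
    (convex_Ioo (-R) R).isPreconnected hg hg' hzmem hg0 hzmem
  have hsum_g' : Summable fun k => g' k z :=
    Summable.of_norm_bounded hu fun k => hg' k z hzmem
  have heval : (∑' k, g' k z) = z / 2 * besselS (ν + 1) z := by
    rw [Summable.tsum_eq_zero_add hsum_g']
    have h0 : g' 0 z = 0 := by simp [hg'_def]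
    rw [h0, zero_add, besselS, ← tsum_mul_left]
    congr 1
    funext k
    have := hshift z k
    simp only [hg'_def]
    push_cast at this ⊢
    linarith [this]
  rw [← heval]
  exact hmain

lemma besselI_eq (ν z : ℝ) : besselI ν z = (z / 2) ^ ν * besselS ν z := rfl

lemma besselI_pos {ν z : ℝ} (hν : 0 ≤ ν) (hz : 0 < z) : 0 < besselI ν z :=
  mul_pos (Real.rpow_pos_of_pos (by positivity) _) (besselS_pos hν z)

lemma hasDerivAt_besselI {ν z : ℝ} (hν : 0 ≤ ν) (hz : 0 < z) :
    HasDerivAt (besselI ν) (ν / z * besselI ν z + besselI (ν + 1) z) z := by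
  have hz2 : (0:ℝ) < z / 2 := by positivity
  have h1 : HasDerivAt (fun y : ℝ => y / 2) (1 / 2) z := by
    simpa using (hasDerivAt_id z).div_const 2
  have h2 : HasDerivAt (fun y : ℝ => (y / 2) ^ ν) (ν * (z / 2) ^ (ν - 1) * (1 / 2)) z :=
    ((Real.hasDerivAt_rpow_const (x := z / 2) (p := ν) (Or.inl hz2.ne')).comp z h1 :)
  have h3 := h2.mul (hasDerivAt_besselS hν z)
  have hfun : (fun y => (y / 2) ^ ν * besselS ν y) = besselI ν := by
    funext y; rw [besselI_eq]
  rw [show (fun y : ℝ => (y / 2) ^ ν) * besselS ν = besselI ν from hfun] at h3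
  refine h3.congr_deriv (Eq.symm ?_)
  rw [besselI_eq, besselI_eq]
  have e1 : (z / 2) ^ (ν - 1) = (z / 2) ^ ν / (z / 2) := by
    rw [Real.rpow_sub hz2, Real.rpow_one]
  have e2 : (z / 2) ^ (ν + 1) = (z / 2) ^ ν * (z / 2) := by
    rw [Real.rpow_add hz2, Real.rpow_one]
  rw [e1, e2]
  field_simp

/-- The analytical expression of the Rényi divergence of order `α` tends, as
`α → 1`, to the analytical expression of the Kullback–Leibler divergence. -/
theorem renyi_tendsto_kl (p : ℕ) (hp : 2 ≤ p)
    (κy κz : ℝ) (hκy : 0 < κy) (hκz : 0 < κz)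
    (μy μz : EuclideanSpace ℝ (Fin p)) (hμy : ‖μy‖ = 1) (hμz : ‖μz‖ = 1) :
    Tendsto (fun α : ℝ =>
        nuOf p / (α - 1)
            * Real.log (κy ^ α * κz ^ (1 - α) / ‖(α * κy) • μy + ((1 - α) * κz) • μz‖)
          + α / (α - 1)
            * Real.log (besselI (nuOf p) ‖(α * κy) • μy + ((1 - α) * κz) • μz‖
                / besselI (nuOf p) κy)
          - Real.log (besselI (nuOf p) ‖(α * κy) • μy + ((1 - α) * κz) • μz‖
                / besselI (nuOf p) κz))
      (nhdsWithin 1 {(1 : ℝ)}ᶜ)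
      (nhds (nuOf p * Real.log (κy / κz)
        - Real.log (besselI (nuOf p) κy / besselI (nuOf p) κz)
        + besselRatio (nuOf p) κy * ⟪κy • μy - κz • μz, μy⟫)) := by
  set ν : ℝ := nuOf p with hν_def
  have hp2 : (2:ℝ) ≤ (p:ℝ) := by exact_mod_cast hp
  have hν : 0 ≤ ν := by rw [hν_def, nuOf]; linarith
  set c : ℝ := ⟪μy, μz⟫ with hc_def
  set Q : ℝ → ℝ := fun α => (α * κy) ^ 2 + 2 * ((α * κy) * ((1 - α) * κz)) * c
      + ((1 - α) * κz) ^ 2 with hQ_def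
  have hKeq : ∀ α : ℝ, ‖(α * κy) • μy + ((1 - α) * κz) • μz‖ = Real.sqrt (Q α) := by
    intro α
    rw [← Real.sqrt_sq (norm_nonneg ((α * κy) • μy + ((1 - α) * κz) • μz))]
    congr 1
    rw [@norm_add_sq_real]
    simp only [hQ_def, norm_smul, Real.norm_eq_abs, real_inner_smul_left, real_inner_smul_right,
      hμy, hμz, mul_one, hc_def]
    rw [mul_pow, mul_pow, sq_abs, sq_abs]
    ring
  have hQ1 : Q 1 = κy ^ 2 := by norm_num [hQ_def]
  have hsq1 : Real.sqrt (Q 1) = κy := by rw [hQ1, Real.sqrt_sq hκy.le]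
  have hA : HasDerivAt (fun α : ℝ => α * κy) κy 1 := by
    simpa using (hasDerivAt_id (1:ℝ)).mul_const κy
  have hB : HasDerivAt (fun α : ℝ => (1 - α) * κz) (-κz) 1 := by
    simpa using ((hasDerivAt_const (1:ℝ) (1:ℝ)).sub (hasDerivAt_id 1)).mul_const κz
  have hQd : HasDerivAt Q (2 * κy ^ 2 - 2 * κy * κz * c) 1 := by
    have h := ((hA.pow 2).add (((hA.mul hB).const_mul 2).mul_const c)).add (hB.pow 2)
    refine h.congr_deriv (Eq.symm ?_)
    norm_num
    ring
  have hKd : HasDerivAt (fun α => Real.sqrt (Q α)) (κy - κz * c) 1 := by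
    have h := (Real.hasDerivAt_sqrt (by rw [hQ1]; positivity)).comp 1 hQd
    refine h.congr_deriv (Eq.symm ?_)
    rw [hQ1, Real.sqrt_sq hκy.le]
    field_simp
  have hIy : 0 < besselI ν κy := besselI_pos hν hκy
  have hIz : 0 < besselI ν κz := besselI_pos hν hκz
  have hId := hasDerivAt_besselI hν hκy
  have hLd : HasDerivAt (fun t => Real.log (besselI ν t)) (ν / κy + besselRatio ν κy) κy := by
    have h := (Real.hasDerivAt_log hIy.ne').comp κy hId
    refine h.congr_deriv (Eq.symm ?_)
    rw [besselRatio]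
    field_simp
  have hlogsq : HasDerivAt (fun α => Real.log (Real.sqrt (Q α))) ((κy - κz * c) / κy) 1 := by
    have hlog : HasDerivAt Real.log (Real.sqrt (Q 1))⁻¹ (Real.sqrt (Q 1)) :=
      Real.hasDerivAt_log (by rw [hsq1]; exact hκy.ne')
    have h := hlog.comp 1 hKd
    refine h.congr_deriv (Eq.symm ?_)
    rw [hsq1]
    field_simp
  have hLK : HasDerivAt (fun α => Real.log (besselI ν (Real.sqrt (Q α))))
      ((ν / κy + besselRatio ν κy) * (κy - κz * c)) 1 := by
    have hL' : HasDerivAt (fun t => Real.log (besselI ν t)) (ν / κy + besselRatio ν κy)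
        (Real.sqrt (Q 1)) := by rw [hsq1]; exact hLd
    exact hL'.comp 1 hKd
  set F : ℝ → ℝ := fun α => ν * (α * Real.log κy + (1 - α) * Real.log κz
      - Real.log (Real.sqrt (Q α)))
      + α * (Real.log (besselI ν (Real.sqrt (Q α))) - Real.log (besselI ν κy)) with hF_def
  set m : ℝ := ν * (Real.log κy - Real.log κz) + besselRatio ν κy * (κy - κz * c) with hm_def
  have hFd : HasDerivAt F m 1 := by
    have h1 : HasDerivAt (fun α : ℝ => α * Real.log κy) (Real.log κy) 1 := by
      simpa using (hasDerivAt_id (1:ℝ)).mul_const (Real.log κy)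
    have h2 : HasDerivAt (fun α : ℝ => (1 - α) * Real.log κz) (-Real.log κz) 1 := by
      simpa using ((hasDerivAt_const (1:ℝ) (1:ℝ)).sub (hasDerivAt_id 1)).mul_const (Real.log κz)
    have h3 := ((h1.add h2).sub hlogsq).const_mul ν
    have h4 := (hasDerivAt_id (1:ℝ)).mul (hLK.sub_const (Real.log (besselI ν κy)))
    have h5 := h3.add h4
    refine h5.congr_deriv (Eq.symm ?_)
    rw [hm_def, hsq1, id_eq]
    field_simp
    ring
  have hF1 : F 1 = 0 := by
    rw [hF_def]
    simp only [hsq1]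
    ring
  have hslope : Tendsto (slope F 1) (nhdsWithin 1 {(1:ℝ)}ᶜ) (nhds m) :=
    hasDerivAt_iff_tendsto_slope.mp hFd
  have hKcont : ContinuousAt (fun α => Real.sqrt (Q α)) 1 := hKd.continuousAt
  have hlogIcont : ContinuousAt (fun t => Real.log (besselI ν t)) κy :=
    (Real.continuousAt_log hIy.ne').comp hId.continuousAt
  have hcont : Tendsto (fun α => Real.log (besselI ν (Real.sqrt (Q α))))
      (nhdsWithin 1 {(1:ℝ)}ᶜ) (nhds (Real.log (besselI ν κy))) := by
    have h1 : ContinuousAt (fun t => Real.log (besselI ν t)) (Real.sqrt (Q 1)) := by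
      rw [hsq1]; exact hlogIcont
    have h2 : ContinuousAt (fun α => Real.log (besselI ν (Real.sqrt (Q α)))) 1 :=
      ContinuousAt.comp (x := (1:ℝ)) (g := fun t => Real.log (besselI ν t)) h1 hKcont
    have h3 := h2.tendsto
    rw [hsq1] at h3
    exact h3.mono_left nhdsWithin_le_nhds
  have hcomb : Tendsto (fun α => slope F 1 α
        - (Real.log (besselI ν (Real.sqrt (Q α))) - Real.log (besselI ν κz)))
      (nhdsWithin 1 {(1:ℝ)}ᶜ)
      (nhds (m - (Real.log (besselI ν κy) - Real.log (besselI ν κz)))) :=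
    hslope.sub (hcont.sub tendsto_const_nhds)
  have hev1 : ∀ᶠ α in nhdsWithin 1 {(1:ℝ)}ᶜ, α ≠ 1 := by
    filter_upwards [self_mem_nhdsWithin] with α hα
    exact hα
  have hev2 : ∀ᶠ α in nhdsWithin 1 {(1:ℝ)}ᶜ, 0 < Real.sqrt (Q α) := by
    have h0 : (0:ℝ) < Real.sqrt (Q 1) := by rw [hsq1]; exact hκy
    exact (hKcont.eventually (eventually_gt_nhds h0)).filter_mono nhdsWithin_le_nhds
  have hEq : (fun α => slope F 1 α
        - (Real.log (besselI ν (Real.sqrt (Q α))) - Real.log (besselI ν κz)))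
      =ᶠ[nhdsWithin 1 {(1:ℝ)}ᶜ]
      (fun α : ℝ =>
        ν / (α - 1)
            * Real.log (κy ^ α * κz ^ (1 - α) / ‖(α * κy) • μy + ((1 - α) * κz) • μz‖)
          + α / (α - 1)
            * Real.log (besselI ν ‖(α * κy) • μy + ((1 - α) * κz) • μz‖ / besselI ν κy)
          - Real.log (besselI ν ‖(α * κy) • μy + ((1 - α) * κz) • μz‖ / besselI ν κz)) := by
    filter_upwards [hev1, hev2] with α hα hs
    have hα1 : α - 1 ≠ 0 := sub_ne_zero.mpr hα
    have hIs : 0 < besselI ν (Real.sqrt (Q α)) := besselI_pos hν hs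
    have hry : (0:ℝ) < κy ^ α := Real.rpow_pos_of_pos hκy α
    have hrz : (0:ℝ) < κz ^ (1 - α) := Real.rpow_pos_of_pos hκz (1 - α)
    rw [hKeq α, Real.log_div (by positivity) hs.ne', Real.log_mul hry.ne' hrz.ne',
      Real.log_rpow hκy, Real.log_rpow hκz,
      Real.log_div hIs.ne' hIy.ne', Real.log_div hIs.ne' hIz.ne',
      slope_def_field, hF1, hF_def]
    field_simp
    ring
  have hfinal := hcomb.congr' hEq
  convert hfinal using 2
  have hinner : ⟪κy • μy - κz • μz, μy⟫ = κy - κz * c := by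
    rw [inner_sub_left, real_inner_smul_left, real_inner_smul_left,
      real_inner_self_eq_norm_sq, hμy, real_inner_comm μy μz]
    norm_num [hc_def]
  rw [hinner, Real.log_div hκy.ne' hκz.ne', Real.log_div hIy.ne' hIz.ne', hm_def]
  ring
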